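/- Let H be a normal subgroup of a group G, and let x, y ∈ G be elements of the same order such that for every integer k, x^k ∈ H if and only if y^k ∈ H. Let G* = HNN(G, ⟨x⟩, ⟨y⟩, t) be the HNN extension of G with stable letter t satisfying t⁻¹xt = y. Then the normal closure of H in G* intersected with G equals H. -/
import Mathlib


/-- Lemma 3.3: Let `H` be a normal subgroup of `G`, `x y : G` of the same order with
`x^k ∈ H ↔ y^k ∈ H` for all integers `k`. In the HNN extension of `G` identifying
`⟨x⟩` with `⟨y⟩` via `x ↦ y` (with stable letter `t`), the normal closure of `H`
intersected with `G` equals `H`. -/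
theorem hnn_normal_closure_inter_base
    {G : Type*} [Group G] (H : Subgroup G) [H.Normal] (x y : G)
    (horder : orderOf x = orderOf y)
    (hk : ∀ k : ℤ, x ^ k ∈ H ↔ y ^ k ∈ H)
    (φ : (Subgroup.zpowers x) ≃* (Subgroup.zpowers y))
    (hφ : (φ ⟨x, Subgroup.mem_zpowers x⟩ : G) = y) :
    Subgroup.comap (HNNExtension.of : G →* HNNExtension G (Subgroup.zpowers x) (Subgroup.zpowers y) φ)
      (Subgroup.normalClosure (HNNExtension.of '' (H : Set G))) = H := by
  classical
  -- the quotient group and projection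
  set Q := G ⧸ H with hQ
  set π : G →* Q := QuotientGroup.mk' H with hπ
  -- the two homs from `Multiplicative ℤ`
  set f : Multiplicative ℤ →* Q := zpowersHom Q (π x) with hf
  set g : Multiplicative ℤ →* Q := zpowersHom Q (π y) with hg
  have hker : f.ker = g.ker := by
    ext a
    simp only [MonoidHom.mem_ker, hf, hg, zpowersHom_apply]
    rw [← map_zpow, ← map_zpow]
    rw [show (π (x ^ a.toAdd) = 1) ↔ x ^ a.toAdd ∈ π.ker from Iff.rfl,
      show (π (y ^ a.toAdd) = 1) ↔ y ^ a.toAdd ∈ π.ker from Iff.rfl,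
      hπ, QuotientGroup.ker_mk']
    exact hk a.toAdd
  have hrf : f.range = Subgroup.zpowers (π x) := by
    ext b
    simp only [MonoidHom.mem_range, hf, zpowersHom_apply, Subgroup.mem_zpowers_iff]
    exact ⟨fun ⟨a, ha⟩ => ⟨a.toAdd, ha⟩, fun ⟨k, hk'⟩ => ⟨Multiplicative.ofAdd k, hk'⟩⟩
  have hrg : g.range = Subgroup.zpowers (π y) := by
    ext b
    simp only [MonoidHom.mem_range, hg, zpowersHom_apply, Subgroup.mem_zpowers_iff]
    exact ⟨fun ⟨a, ha⟩ => ⟨a.toAdd, ha⟩, fun ⟨k, hk'⟩ => ⟨Multiplicative.ofAdd k, hk'⟩⟩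
  -- the induced isomorphism on the quotient
  set ψ : (Subgroup.zpowers (π x)) ≃* (Subgroup.zpowers (π y)) :=
    ((MulEquiv.subgroupCongr hrf).symm.trans
      ((QuotientGroup.quotientKerEquivRange f).symm.trans
        ((QuotientGroup.quotientMulEquivOfEq hker).trans
          ((QuotientGroup.quotientKerEquivRange g).trans (MulEquiv.subgroupCongr hrg))))) with hψ
  have hfmk : ∀ k : ℤ,
      (QuotientGroup.quotientKerEquivRange f) (QuotientGroup.mk (Multiplicative.ofAdd k))
        = ⟨(π x) ^ k, ⟨Multiplicative.ofAdd k, rfl⟩⟩ := by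
    intro k; rfl
  have hgmk : ∀ k : ℤ,
      (QuotientGroup.quotientKerEquivRange g) (QuotientGroup.mk (Multiplicative.ofAdd k))
        = ⟨(π y) ^ k, ⟨Multiplicative.ofAdd k, rfl⟩⟩ := by
    intro k; rfl
  have key : ∀ (k : ℤ) (hm : (π x) ^ k ∈ Subgroup.zpowers (π x)),
      (ψ ⟨(π x) ^ k, hm⟩ : Q) = (π y) ^ k := by
    intro k hm
    have h1 : (MulEquiv.subgroupCongr hrf).symm ⟨(π x) ^ k, hm⟩
        = ⟨(π x) ^ k, ⟨Multiplicative.ofAdd k, rfl⟩⟩ := by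
      apply Subtype.ext
      exact MulEquiv.subgroupCongr_symm_apply hrf _
    have h2 : (QuotientGroup.quotientKerEquivRange f).symm
        (⟨(π x) ^ k, ⟨Multiplicative.ofAdd k, rfl⟩⟩ : f.range)
        = QuotientGroup.mk (Multiplicative.ofAdd k) := by
      rw [MulEquiv.symm_apply_eq, hfmk k]
    simp only [hψ, MulEquiv.trans_apply, h1, h2,
      QuotientGroup.quotientMulEquivOfEq_mk, hgmk k]
    exact MulEquiv.subgroupCongr_apply hrg _
  -- the induced homomorphism between HNN extensions
  have hcond : ∀ a : Subgroup.zpowers x,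
      (HNNExtension.t : HNNExtension Q (Subgroup.zpowers (π x)) (Subgroup.zpowers (π y)) ψ)
          * ((HNNExtension.of).comp π) (a : G)
        = ((HNNExtension.of).comp π) ((φ a : G)) * HNNExtension.t := by
    rintro ⟨a, ha⟩
    obtain ⟨k, rfl⟩ := Subgroup.mem_zpowers_iff.mp ha
    have hxk : (⟨x ^ k, ha⟩ : Subgroup.zpowers x)
        = (⟨x, Subgroup.mem_zpowers x⟩ : Subgroup.zpowers x) ^ k := by
      apply Subtype.ext; rfl
    have hφk : ((φ ⟨x ^ k, ha⟩ : Subgroup.zpowers y) : G) = y ^ k := by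
      rw [hxk, map_zpow]
      push_cast
      rw [hφ]
    have hmem : (π x) ^ k ∈ Subgroup.zpowers (π x) := Subgroup.zpow_mem _ (Subgroup.mem_zpowers _) k
    have := HNNExtension.t_mul_of (φ := ψ) ⟨(π x) ^ k, hmem⟩
    simp only [key k hmem] at this
    simpa only [MonoidHom.comp_apply, hφk, map_zpow] using this
  set Φ : HNNExtension G (Subgroup.zpowers x) (Subgroup.zpowers y) φ →*
      HNNExtension Q (Subgroup.zpowers (π x)) (Subgroup.zpowers (π y)) ψ :=
    HNNExtension.lift ((HNNExtension.of).comp π) HNNExtension.t hcond with hΦ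
  have hncl : Subgroup.normalClosure
      ((HNNExtension.of : G →* HNNExtension G (Subgroup.zpowers x) (Subgroup.zpowers y) φ)
        '' (H : Set G)) ≤ Φ.ker := by
    apply Subgroup.normalClosure_le_normal
    rintro _ ⟨h, hh, rfl⟩
    simp only [SetLike.mem_coe, MonoidHom.mem_ker, hΦ, HNNExtension.lift_of,
      MonoidHom.comp_apply]
    have : π h = 1 := (QuotientGroup.eq_one_iff h).mpr hh
    rw [this, map_one]
  ext a
  simp only [Subgroup.mem_comap]
  constructor
  · intro hmem
    have h1 : Φ (HNNExtension.of a) = 1 := hncl hmem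
    rw [hΦ, HNNExtension.lift_of, MonoidHom.comp_apply] at h1
    have h2 : π a = 1 := by
      apply HNNExtension.of_injective (φ := ψ)
      rw [h1, map_one]
    exact (QuotientGroup.eq_one_iff a).mp h2
  · intro ha
    exact Subgroup.subset_normalClosure ⟨a, ha, rfl⟩
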